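/- Let n ≥ 2 be an integer and δ ∈ [0, 1]. For k = 1, …, n define the vector a_k = √(2(1−δ)) · (cos(kπ/n), sin(kπ/n)) ∈ ℝ² and the 2×2 real matrix A_k = a_k a_kᵀ. Then the operator norm of the matrix product satisfies ‖A_n A_{n−1} ⋯ A_1‖ = (2(1−δ))^n (cos(π/n))^{n−1}. -/

import Mathlib

open Real
open Matrix



lemma vmv_mul (u v w x : Fin 2 → ℝ) :
    Matrix.vecMulVec u v * Matrix.vecMulVec w x =
      (v ⬝ᵥ w) • Matrix.vecMulVec u x := by
  ext i j
  simp [Matrix.mul_apply, Matrix.vecMulVec_apply, dotProduct, Finset.sum_mul]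
  ring

lemma clm_vmv (u v : Fin 2 → ℝ) :
    Matrix.toEuclideanCLM (𝕜 := ℝ) (Matrix.vecMulVec u v) =
      (innerSL ℝ ((WithLp.equiv 2 (Fin 2 → ℝ)).symm v)).smulRight
        ((WithLp.equiv 2 (Fin 2 → ℝ)).symm u) := by
  ext x i
  have := Matrix.ofLp_toEuclideanCLM (𝕜 := ℝ) (Matrix.vecMulVec u v) x
  have h : (Matrix.toEuclideanCLM (𝕜 := ℝ) (Matrix.vecMulVec u v) x) i
      = (Matrix.vecMulVec u v).mulVec (WithLp.equiv 2 _ x) i := congrFun this i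
  rw [h]
  simp [Matrix.mulVec, Matrix.vecMulVec_apply, dotProduct,
    ContinuousLinearMap.smulRight_apply, inner, Finset.mul_sum, mul_comm]
  ring

lemma norm_clm_vmv (u v : Fin 2 → ℝ) :
    ‖Matrix.toEuclideanCLM (𝕜 := ℝ) (Matrix.vecMulVec u v)‖ =
      ‖(WithLp.equiv 2 (Fin 2 → ℝ)).symm v‖ * ‖(WithLp.equiv 2 (Fin 2 → ℝ)).symm u‖ := by
  rw [clm_vmv, ContinuousLinearMap.norm_smulRight_apply, innerSL_apply_norm]

lemma prod_vmv (d : ℕ → Fin 2 → ℝ) (c : ℝ)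
    (hd : ∀ k : ℕ, d (k + 2) ⬝ᵥ d (k + 1) = c) (m : ℕ) :
    ((List.ofFn fun j : Fin (m + 1) =>
      Matrix.vecMulVec (d ((j : ℕ) + 1)) (d ((j : ℕ) + 1))).reverse).prod =
      c ^ m • Matrix.vecMulVec (d (m + 1)) (d 1) := by
  induction m with
  | zero => simp
  | succ m ih =>
    rw [List.ofFn_succ']
    simp only [List.concat_eq_append, List.reverse_append, List.reverse_cons,
      List.reverse_nil, List.nil_append, List.singleton_append, List.prod_cons]
    simp only [Fin.coe_castSucc, Fin.val_last]
    rw [ih, Matrix.mul_smul, vmv_mul, hd m, smul_smul, ← pow_succ]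


set_option synthInstance.maxHeartbeats 1000000 in
/-- For `n ≥ 2`, `δ ∈ [0,1]`, and `a_k = √(2(1-δ)) (cos(kπ/n), sin(kπ/n))`, the
rank-one matrices `A_k = a_k a_kᵀ` satisfy
`‖A_n A_{n-1} ⋯ A_1‖ = (2(1-δ))^n (cos(π/n))^{n-1}`, where `‖·‖` is the operator
norm induced by the Euclidean norm on `ℝ²` (realized via `Matrix.toEuclideanCLM`). -/
theorem recht_re_product_norm
    (n : ℕ) (hn : 2 ≤ n) (δ : ℝ) (hδ0 : 0 ≤ δ) (hδ1 : δ ≤ 1)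
    (a : ℕ → Fin 2 → ℝ)
    (ha : ∀ k, a k = ![Real.sqrt (2 * (1 - δ)) * Real.cos (k * π / n),
                       Real.sqrt (2 * (1 - δ)) * Real.sin (k * π / n)]) :
    ‖Matrix.toEuclideanCLM (𝕜 := ℝ)
        (((List.ofFn fun j : Fin n =>
          Matrix.vecMulVec (a ((j : ℕ) + 1)) (a ((j : ℕ) + 1))).reverse).prod)‖ =
      (2 * (1 - δ)) ^ n * Real.cos (π / n) ^ (n - 1) := by
  have hn0 : (0:ℝ) < n := by positivity
  have hδ : (0:ℝ) ≤ 2 * (1 - δ) := by linarith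
  have hs : Real.sqrt (2*(1-δ)) * Real.sqrt (2*(1-δ)) = 2*(1-δ) :=
    Real.mul_self_sqrt hδ
  set c := 2 * (1 - δ) * Real.cos (π / n) with hc
  have hcosnn : 0 ≤ Real.cos (π / n) := by
    apply Real.cos_nonneg_of_mem_Icc
    constructor
    · have : (0:ℝ) ≤ π / n := by positivity
      linarith [Real.pi_nonneg]
    · apply div_le_div_of_nonneg_left Real.pi_nonneg (by norm_num) (by exact_mod_cast hn)
  have hcnn : 0 ≤ c := mul_nonneg hδ hcosnn
  have hdot : ∀ k : ℕ, a (k + 2) ⬝ᵥ a (k + 1) = c := by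
    intro k
    have hcos : Real.cos ((k+2)*π/n) * Real.cos ((k+1)*π/n)
        + Real.sin ((k+2)*π/n) * Real.sin ((k+1)*π/n) = Real.cos (π/n) := by
      rw [← Real.cos_sub]; congr 1; field_simp; ring
    simp only [ha, dotProduct, Fin.sum_univ_two, Matrix.cons_val_zero,
      Matrix.cons_val_one, Matrix.head_cons]
    push_cast
    calc Real.sqrt (2*(1-δ)) * Real.cos (((k:ℝ)+2)*π/n) * (Real.sqrt (2*(1-δ)) * Real.cos (((k:ℝ)+1)*π/n))
        + Real.sqrt (2*(1-δ)) * Real.sin (((k:ℝ)+2)*π/n) * (Real.sqrt (2*(1-δ)) * Real.sin (((k:ℝ)+1)*π/n))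
        = (Real.sqrt (2*(1-δ)) * Real.sqrt (2*(1-δ))) *
          (Real.cos (((k:ℝ)+2)*π/n) * Real.cos (((k:ℝ)+1)*π/n)
            + Real.sin (((k:ℝ)+2)*π/n) * Real.sin (((k:ℝ)+1)*π/n)) := by ring
      _ = c := by rw [hs, hcos]
  have hnorm : ∀ k : ℕ, ‖(WithLp.equiv 2 (Fin 2 → ℝ)).symm (a k)‖ = Real.sqrt (2*(1-δ)) := by
    intro k
    rw [EuclideanSpace.norm_eq]
    congr 1
    simp only [ha, Fin.sum_univ_two, WithLp.equiv_symm_apply, PiLp.toLp_apply, Matrix.cons_val_zero,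
      Matrix.cons_val_one, Matrix.head_cons]
    simp only [Real.norm_eq_abs, sq_abs]
    have := Real.sin_sq_add_cos_sq ((k:ℝ)*π/n)
    nlinarith [hs]
  obtain ⟨m, rfl⟩ : ∃ m, n = m + 2 := ⟨n - 2, by omega⟩
  have hprod : ((List.ofFn fun j : Fin (m + 2) =>
      Matrix.vecMulVec (a ((j : ℕ) + 1)) (a ((j : ℕ) + 1))).reverse).prod
      = c ^ (m + 1) • Matrix.vecMulVec (a (m + 2)) (a 1) := prod_vmv a c hdot (m + 1)
  rw [hprod, _root_.map_smul, norm_smul (c ^ (m + 1)) (Matrix.toEuclideanCLM (𝕜 := ℝ) (Matrix.vecMulVec (a (m + 2)) (a 1))),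
    norm_clm_vmv, hnorm, hnorm]
  rw [Real.norm_eq_abs, abs_of_nonneg (pow_nonneg hcnn _), hs, hc]
  rw [show m + 2 - 1 = m + 1 from rfl, mul_pow]
  ring
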